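/- The clone generated by binary AND, binary OR, and binary XOR equals the clone generated by g₀ together with the constant function false, where g₀(x,y,z) = x ∨ (y ∧ ¬z): a Boolean function f : (Fin n → Bool) → Bool belongs to the first clone if and only if it belongs to the second. -/
import Mathlib


/-- The clone generated by a set `B` of Boolean functions: the smallest family containing all
projections and `B`, and closed under composition. -/
inductive InClone (B : (k : ℕ) → ((Fin k → Bool) → Bool) → Prop) :
    (n : ℕ) → ((Fin n → Bool) → Bool) → Prop
  | proj {n : ℕ} (i : Fin n) : InClone B n (fun x => x i)
  | base {k : ℕ} {g : (Fin k → Bool) → Bool} (hg : B k g) : InClone B k g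
  | comp {k n : ℕ} {g : (Fin k → Bool) → Bool} {h : Fin k → ((Fin n → Bool) → Bool)}
      (hg : InClone B k g) (hh : ∀ i, InClone B n (h i)) :
      InClone B n (fun x => g (fun i => h i x))

/-- g₀(x,y,z) = x ∨ (y ∧ ¬z). -/
def g0 : (Fin 3 → Bool) → Bool := fun x => x 0 || (x 1 && !x 2)

/-- The generating set {∧, ∨, ⊕}. -/
inductive XorBase : (k : ℕ) → ((Fin k → Bool) → Bool) → Prop
  | and : XorBase 2 (fun x => x 0 && x 1)
  | or : XorBase 2 (fun x => x 0 || x 1)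
  | xor : XorBase 2 (fun x => xor (x 0) (x 1))

/-- The generating set {g₀, 0}. -/
inductive G0ZeroBase : (k : ℕ) → ((Fin k → Bool) → Bool) → Prop
  | g0 : G0ZeroBase 3 g0
  | zero : G0ZeroBase 1 (fun _ => false)

lemma InClone.ofEq {B : (k : ℕ) → ((Fin k → Bool) → Bool) → Prop} {n : ℕ}
    {f g : (Fin n → Bool) → Bool} (h : InClone B n f) (e : ∀ x, f x = g x) :
    InClone B n g := by
  have : f = g := funext e
  exact this ▸ h

lemma InClone.comp2 {B : (k : ℕ) → ((Fin k → Bool) → Bool) → Prop} {n : ℕ}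
    {g : (Fin 2 → Bool) → Bool} (hg : InClone B 2 g)
    {h0 h1 : (Fin n → Bool) → Bool} (H0 : InClone B n h0) (H1 : InClone B n h1) :
    InClone B n (fun x => g ![h0 x, h1 x]) := by
  refine (InClone.comp hg (h := ![h0, h1]) ?_).ofEq ?_
  · intro i; fin_cases i <;> assumption
  · intro x; congr 1; funext i; fin_cases i <;> rfl

lemma InClone.comp3 {B : (k : ℕ) → ((Fin k → Bool) → Bool) → Prop} {n : ℕ}
    {g : (Fin 3 → Bool) → Bool} (hg : InClone B 3 g)
    {h0 h1 h2 : (Fin n → Bool) → Bool}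
    (H0 : InClone B n h0) (H1 : InClone B n h1) (H2 : InClone B n h2) :
    InClone B n (fun x => g ![h0 x, h1 x, h2 x]) := by
  refine (InClone.comp hg (h := ![h0, h1, h2]) ?_).ofEq ?_
  · intro i; fin_cases i <;> assumption
  · intro x; congr 1; funext i; fin_cases i <;> rfl

lemma zero_mem {n : ℕ} [NeZero n] : InClone G0ZeroBase n (fun _ => false) := by
  refine (InClone.comp (InClone.base G0ZeroBase.zero) (h := fun _ => fun x => x 0) ?_).ofEq ?_
  · intro i; exact InClone.proj 0
  · intro x; rfl

lemma andnot_mem {n : ℕ} [NeZero n] {f g : (Fin n → Bool) → Bool}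
    (hf : InClone G0ZeroBase n f) (hg : InClone G0ZeroBase n g) :
    InClone G0ZeroBase n (fun x => f x && !g x) := by
  refine (InClone.comp3 (InClone.base G0ZeroBase.g0) zero_mem hf hg).ofEq ?_
  intro x; simp [g0]

lemma or_mem {n : ℕ} [NeZero n] {f g : (Fin n → Bool) → Bool}
    (hf : InClone G0ZeroBase n f) (hg : InClone G0ZeroBase n g) :
    InClone G0ZeroBase n (fun x => f x || g x) := by
  refine (InClone.comp3 (InClone.base G0ZeroBase.g0) hf hg zero_mem).ofEq ?_
  intro x; simp only [g0, Matrix.cons_val_zero, Matrix.cons_val_one, Matrix.head_cons, Matrix.cons_val_two, Matrix.tail_cons]; cases f x <;> cases g x <;> rfl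

lemma and_mem {n : ℕ} [NeZero n] {f g : (Fin n → Bool) → Bool}
    (hf : InClone G0ZeroBase n f) (hg : InClone G0ZeroBase n g) :
    InClone G0ZeroBase n (fun x => f x && g x) := by
  refine (andnot_mem hf (andnot_mem hf hg)).ofEq ?_
  intro x; cases f x <;> cases g x <;> rfl

lemma xor_mem {n : ℕ} [NeZero n] {f g : (Fin n → Bool) → Bool}
    (hf : InClone G0ZeroBase n f) (hg : InClone G0ZeroBase n g) :
    InClone G0ZeroBase n (fun x => xor (f x) (g x)) := by
  refine (or_mem (andnot_mem hf hg) (andnot_mem hg hf)).ofEq ?_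
  intro x; cases f x <;> cases g x <;> rfl

/-- [∧, ∨, ⊕] = [g₀, 0]. -/
theorem clone_xor_eq_clone_g0_zero {n : ℕ} (f : (Fin n → Bool) → Bool) :
    InClone XorBase n f ↔ InClone G0ZeroBase n f := by
  constructor
  · intro hf
    induction hf with
    | proj i => exact InClone.proj i
    | comp hg hh ihg ihh => exact InClone.comp ihg ihh
    | base hb =>
      have : NeZero 2 := ⟨by norm_num⟩
      cases hb with
      | and => exact (and_mem (InClone.proj 0) (InClone.proj 1))
      | or => exact (or_mem (InClone.proj 0) (InClone.proj 1))
      | xor => exact (xor_mem (InClone.proj 0) (InClone.proj 1))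
  · intro hf
    induction hf with
    | proj i => exact InClone.proj i
    | comp hg hh ihg ihh => exact InClone.comp ihg ihh
    | base hb =>
      cases hb with
      | zero =>
        refine (InClone.comp2 (InClone.base XorBase.xor) (InClone.proj 0)
          (InClone.proj 0)).ofEq ?_
        intro x; simp
      | g0 =>
        -- g0 x = x 0 || (x 1 && xor (x 1) (x 2))
        have hand : InClone XorBase 3 (fun x => x 1 && xor (x 1) (x 2)) := by
          refine (InClone.comp2 (InClone.base XorBase.and) (InClone.proj 1)
            ((InClone.comp2 (InClone.base XorBase.xor) (InClone.proj 1)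
              (InClone.proj 2)).ofEq (fun x => by rfl))).ofEq (fun x => by rfl)
        refine (InClone.comp2 (InClone.base XorBase.or) (InClone.proj 0) hand).ofEq ?_
        intro x; simp only [g0, Matrix.cons_val_zero, Matrix.cons_val_one, Matrix.head_cons, Matrix.cons_val_two, Matrix.tail_cons]; cases x 0 <;> cases x 1 <;> cases x 2 <;> rfl
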